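/- Let Φ(x¹,x²) = −(x¹)²/(4x²) − (1/2)log(−x²) on Ω = {(x¹,x²) ∈ ℝ² : x² < 0}, and let g(x) = Hess Φ(x) denote its Hessian matrix. Then at every point of Ω: (i) det g = −1/(4(x²)³); (ii) the Hessian matrix of the function log det g equals [[0,0],[0, 3/(x²)²]]; and (iii) tr( g⁻¹ · Hess(log det g) ) = 6. (Consequently the Kähler metric on the Siegel-Jacobi space 𝕄_Normal has constant scalar curvature −6 and Ricci form proportional to diag(0, 3/(x²)²).) -/

import Mathlib

open Real Matrix ContinuousLinearMap

/-- Partial derivative of `f : ℝⁿ → ℝ` in the `i`-th coordinate direction. -/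
noncomputable def pd {n : ℕ} (i : Fin n) (f : (Fin n → ℝ) → ℝ) : (Fin n → ℝ) → ℝ :=
  fun x => fderiv ℝ f x (Pi.single i 1)

/-- Hessian matrix of second partial derivatives of `f : ℝⁿ → ℝ`. -/
noncomputable def hessian {n : ℕ} (f : (Fin n → ℝ) → ℝ) (x : Fin n → ℝ) :
    Matrix (Fin n) (Fin n) ℝ :=
  Matrix.of fun i j => pd i (pd j f) x

/-- The log-partition function of the normal family (up to an additive constant). -/
noncomputable def ΦN (x : Fin 2 → ℝ) : ℝ :=
  -(x 0) ^ 2 / (4 * x 1) - (1 / 2) * Real.log (-(x 1))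

lemma pd_eq {f : (Fin 2 → ℝ) → ℝ} {L : (Fin 2 → ℝ) →L[ℝ] ℝ} {y} (h : HasFDerivAt f L y)
    (i : Fin 2) : pd i f y = L (Pi.single i 1) := by
  unfold pd; rw [h.fderiv]

lemma pd_congr' {f g : (Fin 2 → ℝ) → ℝ} (h : ∀ z, f z = g z) (i : Fin 2) (y : Fin 2 → ℝ) :
    pd i f y = pd i g y := by
  rw [show f = g from funext h]

lemma comp0 {g : ℝ → ℝ} {g' : ℝ} {y : Fin 2 → ℝ} (h : HasDerivAt g g' (y 0)) :
    HasFDerivAt (fun z : Fin 2 → ℝ => g (z 0)) (g' • (proj 0 : (Fin 2 → ℝ) →L[ℝ] ℝ)) y :=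
  h.comp_hasFDerivAt y (hasFDerivAt_apply 0 y)

lemma comp1 {g : ℝ → ℝ} {g' : ℝ} {y : Fin 2 → ℝ} (h : HasDerivAt g g' (y 1)) :
    HasFDerivAt (fun z : Fin 2 → ℝ => g (z 1)) (g' • (proj 1 : (Fin 2 → ℝ) →L[ℝ] ℝ)) y :=
  h.comp_hasFDerivAt y (hasFDerivAt_apply 1 y)

lemma pd_ΦN (y : Fin 2 → ℝ) (hy : y 1 ≠ 0) :
    pd 0 ΦN y = -(y 0) / (2 * y 1) ∧
    pd 1 ΦN y = (y 0)^2 / (4 * (y 1)^2) - 1/(2 * y 1) := by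
  have e : ∀ z : Fin 2 → ℝ, ΦN z =
      (-(z 0) ^ 2) * (4 * z 1)⁻¹ - (1/2) * Real.log (-(z 1)) := by
    intro z; unfold ΦN; rw [div_eq_mul_inv]
  have h4 : (4:ℝ) * y 1 ≠ 0 := by simp [hy]
  have dA : HasDerivAt (fun t : ℝ => -t ^ 2) (-(2 * y 0)) (y 0) := by
    exact ((hasDerivAt_pow 2 (y 0)).neg).congr_deriv (by norm_num)
  have dB := ((hasDerivAt_id (y 1)).const_mul 4).inv h4
  have dC := (((hasDerivAt_id (y 1)).neg).log (neg_ne_zero.2 hy)).const_mul (1/2)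
  have hF : HasFDerivAt
      (fun z : Fin 2 → ℝ => (-(z 0) ^ 2) * (4 * z 1)⁻¹ - (1/2) * Real.log (-(z 1))) _ y :=
    ((comp0 dA).mul (comp1 dB)).sub (comp1 dC)
  constructor <;> rw [pd_congr' e, pd_eq hF] <;>
    · simp [Pi.single_apply, smul_eq_mul]
      field_simp <;> ring

lemma pd_congr {f g : (Fin 2 → ℝ) → ℝ} {y : Fin 2 → ℝ} (h : f =ᶠ[nhds y] g) (i : Fin 2) :
    pd i f y = pd i g y := by
  unfold pd; rw [Filter.EventuallyEq.fderiv_eq h]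

lemma evopen {f g : (Fin 2 → ℝ) → ℝ} {y : Fin 2 → ℝ} (hy : y 1 ≠ 0)
    (h : ∀ z : Fin 2 → ℝ, z 1 ≠ 0 → f z = g z) : f =ᶠ[nhds y] g :=
  Filter.eventuallyEq_of_mem ((isOpen_ne.preimage (continuous_apply 1)).mem_nhds hy) h

lemma hess_ΦN (y : Fin 2 → ℝ) (hy : y 1 ≠ 0) :
    pd 0 (pd 0 ΦN) y = -1 / (2 * y 1) ∧
    pd 1 (pd 0 ΦN) y = y 0 / (2 * (y 1) ^ 2) ∧
    pd 0 (pd 1 ΦN) y = y 0 / (2 * (y 1) ^ 2) ∧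
    pd 1 (pd 1 ΦN) y = -(y 0) ^ 2 / (2 * (y 1) ^ 3) + 1 / (2 * (y 1) ^ 2) := by
  have h2 : (2:ℝ) * y 1 ≠ 0 := by simp [hy]
  have h4 : (4:ℝ) * (y 1) ^ 2 ≠ 0 := by simp [hy]
  have e0 : pd 0 ΦN =ᶠ[nhds y] fun z => -(z 0) * (2 * z 1)⁻¹ :=
    evopen hy fun z hz => by rw [(pd_ΦN z hz).1, div_eq_mul_inv]
  have e1 : pd 1 ΦN =ᶠ[nhds y] fun z => (z 0) ^ 2 * (4 * (z 1) ^ 2)⁻¹ - (2 * z 1)⁻¹ :=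
    evopen hy fun z hz => by rw [(pd_ΦN z hz).2, div_eq_mul_inv, one_div]
  have dA0 : HasDerivAt (fun t : ℝ => -t) (-1) (y 0) := (hasDerivAt_id (y 0)).neg
  have dB0 := ((hasDerivAt_id (y 1)).const_mul 2).inv h2
  have hF0 : HasFDerivAt (fun z : Fin 2 → ℝ => -(z 0) * (2 * z 1)⁻¹) _ y :=
    (comp0 dA0).mul (comp1 dB0)
  have dA1 := hasDerivAt_pow 2 (y 0)
  have dB1 := ((hasDerivAt_pow 2 (y 1)).const_mul 4).inv h4
  have dC1 := ((hasDerivAt_id (y 1)).const_mul 2).inv h2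
  have hF1 : HasFDerivAt
      (fun z : Fin 2 → ℝ => (z 0) ^ 2 * (4 * (z 1) ^ 2)⁻¹ - (2 * z 1)⁻¹) _ y :=
    ((comp0 dA1).mul (comp1 dB1)).sub (comp1 dC1)
  refine ⟨?_, ?_, ?_, ?_⟩ <;>
    first
      | (rw [pd_congr e0, pd_eq hF0]; simp [Pi.single_apply, smul_eq_mul]; field_simp)
      | (rw [pd_congr e1, pd_eq hF1]; simp [Pi.single_apply, smul_eq_mul]; field_simp; ring)

lemma hessM (x : Fin 2 → ℝ) (hx : x 1 ≠ 0) :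
    hessian ΦN x = !![-1 / (2 * x 1), x 0 / (2 * (x 1) ^ 2);
      x 0 / (2 * (x 1) ^ 2), -(x 0) ^ 2 / (2 * (x 1) ^ 3) + 1 / (2 * (x 1) ^ 2)] := by
  obtain ⟨a, b, c, d⟩ := hess_ΦN x hx
  ext i j
  fin_cases i <;> fin_cases j <;> simp [hessian, a, b, c, d]

lemma det_hess (y : Fin 2 → ℝ) (hy : y 1 ≠ 0) :
    (hessian ΦN y).det = -1 / (4 * (y 1) ^ 3) := by
  rw [hessM y hy, Matrix.det_fin_two_of]
  field_simp
  ring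

lemma pd_logdet (y : Fin 2 → ℝ) (hy : y 1 ≠ 0) :
    pd 0 (fun z => Real.log ((hessian ΦN z).det)) y = 0 ∧
    pd 1 (fun z => Real.log ((hessian ΦN z).det)) y = -3 / y 1 := by
  have h4 : (4:ℝ) * (y 1) ^ 3 ≠ 0 := by simp [hy]
  have e : (fun z => Real.log ((hessian ΦN z).det)) =ᶠ[nhds y]
      fun z => Real.log ((4 * (z 1) ^ 3)⁻¹) := by
    refine evopen hy fun z hz => ?_
    rw [det_hess z hz, neg_div, ← Real.log_neg_eq_log, neg_neg, one_div]
  have dB := ((hasDerivAt_pow 3 (y 1)).const_mul 4).inv h4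
  have dL := dB.log (inv_ne_zero h4)
  have hF : HasFDerivAt (fun z : Fin 2 → ℝ => Real.log ((4 * (z 1) ^ 3)⁻¹)) _ y :=
    comp1 dL
  constructor <;> rw [pd_congr e, pd_eq hF] <;>
    · simp [Pi.single_apply, smul_eq_mul]
      try field_simp
      try ring

lemma hess_logdet (x : Fin 2 → ℝ) (hx : x 1 ≠ 0) :
    hessian (fun y => Real.log ((hessian ΦN y).det)) x =
      !![(0 : ℝ), 0; 0, 3 / (x 1) ^ 2] := by
  have e0 : pd 0 (fun z => Real.log ((hessian ΦN z).det)) =ᶠ[nhds x]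
      (fun _ => (0 : ℝ)) :=
    evopen hx fun z hz => (pd_logdet z hz).1
  have e1 : pd 1 (fun z => Real.log ((hessian ΦN z).det)) =ᶠ[nhds x]
      fun z => (-3) * (z 1)⁻¹ :=
    evopen hx fun z hz => by rw [(pd_logdet z hz).2, div_eq_mul_inv, neg_mul]
  have hC : HasFDerivAt (fun _ : Fin 2 → ℝ => (0:ℝ)) (0 : (Fin 2 → ℝ) →L[ℝ] ℝ) x :=
    hasFDerivAt_const 0 x
  have dB := ((hasDerivAt_id (x 1)).inv hx).const_mul (-3 : ℝ)
  have hF : HasFDerivAt (fun z : Fin 2 → ℝ => (-3) * (z 1)⁻¹) _ x := comp1 dB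
  have F0 : pd 0 (fun z : Fin 2 → ℝ => (-3) * (z 1)⁻¹) x = 0 := by
    rw [pd_eq hF]; simp [Pi.single_apply]
  have F1 : pd 1 (fun z : Fin 2 → ℝ => (-3) * (z 1)⁻¹) x = 3 / (x 1) ^ 2 := by
    rw [pd_eq hF]; simp [Pi.single_apply, smul_eq_mul]; field_simp
  have C0 : pd 0 (fun _ : Fin 2 → ℝ => (0:ℝ)) x = 0 := by rw [pd_eq hC]; simp
  have C1 : pd 1 (fun _ : Fin 2 → ℝ => (0:ℝ)) x = 0 := by rw [pd_eq hC]; simp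
  have H00 := (pd_congr e0 0).trans C0
  have H10 := (pd_congr e0 1).trans C1
  have H01 := (pd_congr e1 0).trans F0
  have H11 := (pd_congr e1 1).trans F1
  ext i j
  fin_cases i <;> fin_cases j <;> [exact H00; exact H01; exact H10; exact H11]

/-- The Siegel-Jacobi metric has Ricci form `diag(0, -3/(x²)²)` and constant scalar
curvature `-6`: explicit formulas for `det g`, the Hessian of `log det g`, and the
trace of `g⁻¹ · Hess(log det g)`. -/
theorem siegelJacobi_scalar_curvature (x : Fin 2 → ℝ) (hx : x 1 < 0) :
    (hessian ΦN x).det = -1 / (4 * (x 1) ^ 3) ∧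
    hessian (fun y => Real.log ((hessian ΦN y).det)) x =
      !![(0 : ℝ), 0; 0, 3 / (x 1) ^ 2] ∧
    Matrix.trace ((hessian ΦN x)⁻¹ *
      hessian (fun y => Real.log ((hessian ΦN y).det)) x) = 6 := by
  have hne : x 1 ≠ 0 := ne_of_lt hx
  refine ⟨det_hess x hne, hess_logdet x hne, ?_⟩
  rw [hess_logdet x hne, Matrix.inv_def, det_hess x hne, hessM x hne]
  simp [Matrix.adjugate_fin_two, Ring.inverse_eq_inv', Matrix.trace_fin_two,
    Matrix.mul_apply, Fin.sum_univ_two, Matrix.smul_apply, smul_eq_mul]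
  field_simp
  ring
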